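/- arXiv:1806.08786 — 7 statements merged into one kernel-verified Lean document; each statement's English description precedes it below -/
import Mathlib

section
/- Let A be a unital C*-algebra and g̃ ∈ GL₂(A) with ⟨g̃·e₁, g̃·e₁⟩ = 1. Then there exists a unitary ũ ∈ M₂(A) with ũ·e₁ = g̃·e₁. -/
set_option maxHeartbeats 1000000 in
/-- Let `A` be a unital C*-algebra and `g̃ ∈ GL₂(A)` with
`⟨g̃ e₁, g̃ e₁⟩ = 1` (i.e. the `(1,1)` entry of `g̃* g̃` is `1`, where
`e₁ = (1,0)`).  Then there is a unitary `ũ ∈ M₂(A)` with `ũ e₁ = g̃ e₁`. -/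
theorem stmt4 {A : Type*} [CStarAlgebra A]
    (g : Matrix (Fin 2) (Fin 2) A) (hg : IsUnit g)
    (h11 : (star g * g) 0 0 = 1) :
    ∃ u : Matrix (Fin 2) (Fin 2) A, star u * u = 1 ∧ u * star u = 1 ∧
      u.mulVec ![1, 0] = g.mulVec ![1, 0] := by
  let _ : PartialOrder A := CStarAlgebra.spectralOrder A
  have _ : StarOrderedRing A := CStarAlgebra.spectralOrderedRing A
  set b : Matrix (Fin 2) (Fin 2) A := star g * g with hb
  have hbsa : star b = b := by simp [hb, star_mul, mul_assoc]
  set a : A := b 0 1 with ha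
  have hb10 : b 1 0 = star a := by
    have := congrFun (congrFun hbsa 1) 0
    simpa [Matrix.star_apply] using this.symm
  set T : Matrix (Fin 2) (Fin 2) A := !![1, -a; 0, 1] with hT
  have hTstar : star T = !![1, 0; -star a, 1] := by
    rw [hT]
    ext i j
    fin_cases i <;> fin_cases j <;>
      simp [Matrix.star_apply]
  have hTT : T * !![1, a; 0, 1] = 1 := by
    rw [hT, Matrix.mul_fin_two, Matrix.one_fin_two]
    ext i j; fin_cases i <;> fin_cases j <;> simp
  have hTT' : !![1, a; 0, 1] * T = 1 := by
    rw [hT, Matrix.mul_fin_two, Matrix.one_fin_two]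
    ext i j; fin_cases i <;> fin_cases j <;> simp
  have hTunit : IsUnit T := ⟨⟨T, _, hTT, hTT'⟩, rfl⟩
  set g' : Matrix (Fin 2) (Fin 2) A := g * T with hg'
  have hg'unit : IsUnit g' := hg.mul hTunit
  set c : A := b 1 1 - star a * a with hc
  have key : star g' * g' = !![1, 0; 0, c] := by
    have h1 : star g' * g' = star T * b * T := by
      simp [hg', hb, star_mul, mul_assoc]
    rw [h1, Matrix.eta_fin_two b, ← ha, hb10, h11, hTstar, hT,
      Matrix.mul_fin_two, Matrix.mul_fin_two, hc]
    ext i j; fin_cases i <;> fin_cases j <;> simp <;> noncomm_ring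
  -- c is nonneg
  have hc_entry : c = star (g' 0 1) * g' 0 1 + star (g' 1 1) * g' 1 1 := by
    have h2 := congrFun (congrFun key 1) 1
    simp [Matrix.mul_apply, Fin.sum_univ_two, Matrix.star_apply] at h2
    rw [← h2]
  have hcnn : (0 : A) ≤ c := by
    rw [hc_entry]
    exact add_nonneg (star_mul_self_nonneg _) (star_mul_self_nonneg _)
  -- c is a unit
  obtain ⟨M, hM⟩ : IsUnit (!![(1 : A), 0; 0, c]) := key ▸ hg'unit.star.mul hg'unit
  set N : Matrix (Fin 2) (Fin 2) A := (M⁻¹).val with hN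
  have hMN : !![(1 : A), 0; 0, c] * N = 1 := by
    rw [← hM, hN]; exact M.mul_inv
  have hNM : N * !![(1 : A), 0; 0, c] = 1 := by
    rw [← hM, hN]; exact M.inv_mul
  have hcunit : IsUnit c := by
    have h1 := congrFun (congrFun hMN 1) 1
    have h2 := congrFun (congrFun hNM 1) 1
    simp [Matrix.mul_apply, Fin.sum_univ_two, Matrix.one_apply] at h1 h2
    exact ⟨⟨c, N 1 1, h1, h2⟩, rfl⟩
  -- square root of c
  set d : A := CFC.sqrt c with hd
  have hdnn : (0 : A) ≤ d := CFC.sqrt_nonneg c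
  have hdd : d * d = c := CFC.sqrt_mul_sqrt_self c hcnn
  have hdsa : star d = d := hdnn.isSelfAdjoint.star_eq
  obtain ⟨cu, hcu⟩ := hcunit
  have hy : d * (d * ↑cu⁻¹) = 1 := by
    rw [← mul_assoc, hdd, ← hcu]; exact cu.mul_inv
  have hx : (↑cu⁻¹ * d) * d = 1 := by
    rw [mul_assoc, hdd, ← hcu]; exact cu.inv_mul
  have hxy : (↑cu⁻¹ * d : A) = d * ↑cu⁻¹ := left_inv_eq_right_inv hx hy
  have hdunit : IsUnit d := isUnit_iff_exists.mpr ⟨d * ↑cu⁻¹, hy, hxy ▸ hx⟩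
  obtain ⟨du, hdu⟩ := hdunit
  set e : A := (↑du⁻¹ : A) with he
  have hde : d * e = 1 := by rw [he, ← hdu]; exact du.mul_inv
  have hed : e * d = 1 := by rw [he, ← hdu]; exact du.inv_mul
  have hesa : star e = e := by
    have h1 : star e * d = 1 := by rw [← hdsa, ← star_mul, hde, star_one]
    calc star e = star e * (d * e) := by rw [hde, mul_one]
      _ = e := by rw [← mul_assoc, h1, one_mul]
  set D : Matrix (Fin 2) (Fin 2) A := !![1, 0; 0, e] with hD
  have hDstar : star D = D := by
    rw [hD]; ext i j
    fin_cases i <;> fin_cases j <;> simp [Matrix.star_apply, hesa]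
  set u : Matrix (Fin 2) (Fin 2) A := g' * D with hu
  have huu : star u * u = 1 := by
    have h1 : star u * u = star D * (star g' * g') * D := by
      simp [hu, star_mul, mul_assoc]
    rw [h1, key, hDstar, hD, Matrix.mul_fin_two, Matrix.mul_fin_two,
      Matrix.one_fin_two]
    have h2 : e * c * e = 1 := by
      rw [← hdd, show e * (d * d) * e = (e * d) * (d * e) by noncomm_ring,
        hed, hde, one_mul]
    ext i j; fin_cases i <;> fin_cases j <;> simp [h2]
  have hDunit : IsUnit D := by
    refine ⟨⟨D, !![1, 0; 0, d], ?_, ?_⟩, rfl⟩ <;>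
      · rw [hD, Matrix.mul_fin_two, Matrix.one_fin_two]
        ext i j; fin_cases i <;> fin_cases j <;> simp [hde, hed]
  have huunit : IsUnit u := hg'unit.mul hDunit
  have huu' : u * star u = 1 := by
    have h2 : u * (huunit.unit⁻¹).val = 1 := huunit.mul_val_inv
    have h1 : star u = (huunit.unit⁻¹).val := left_inv_eq_right_inv huu h2
    rw [h1]; exact h2
  refine ⟨u, huu, huu', ?_⟩
  have hTD : T * D = !![1, -a * e; 0, e] := by
    rw [hT, hD, Matrix.mul_fin_two]
    ext i j; fin_cases i <;> fin_cases j <;> simp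
  have h4 : u = g * (T * D) := by rw [hu, hg', mul_assoc]
  rw [h4, ← Matrix.mulVec_mulVec, hTD]
  congr 1
  ext i
  fin_cases i <;> simp [Matrix.mulVec, dotProduct, Fin.sum_univ_two]
end

section
/- Let A be a unital C*-algebra, and x = (x1, x2) ∈ A² with x1 invertible and x1*x1 − x2*x2 = 1. Then ‖x2·x1⁻¹‖ < 1. -/
/-- If `x = (x1, x2) ∈ A²` with `x1` invertible and
`x1* x1 − x2* x2 = 1` (i.e. `x` lies in the hyperboloid `K_θ`), then
`‖x2 x1⁻¹‖ < 1`, i.e. `x2 x1⁻¹` lies in the open unit disk of `A`. -/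
theorem stmt5 {A : Type*} [CStarAlgebra A] (x1 x2 : A) [Invertible x1]
    (h : star x1 * x1 - star x2 * x2 = 1) :
    ‖x2 * ⅟x1‖ < 1 := by
  letI := CStarAlgebra.spectralOrder A
  letI := CStarAlgebra.spectralOrderedRing A
  obtain hA | hA := subsingleton_or_nontrivial A
  · simpa [Subsingleton.elim (x2 * ⅟x1) 0] using one_pos
  set a : A := x2 * ⅟x1 with ha
  set b : A := star (⅟x1) * ⅟x1 with hb
  have hx2 : star x2 * x2 = star x1 * x1 - 1 := by
    rw [← h]; noncomm_ring
  have key : star a * a = 1 - b := by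
    rw [ha, hb, star_mul]
    calc star (⅟x1) * star x2 * (x2 * ⅟x1)
        = star (⅟x1) * (star x2 * x2) * ⅟x1 := by noncomm_ring
      _ = star (⅟x1) * (star x1 * x1 - 1) * ⅟x1 := by rw [hx2]
      _ = star (⅟x1) * star x1 * (x1 * ⅟x1) - star (⅟x1) * ⅟x1 := by noncomm_ring
      _ = star (x1 * ⅟x1) * (x1 * ⅟x1) - star (⅟x1) * ⅟x1 := by rw [star_mul]
      _ = 1 - star (⅟x1) * ⅟x1 := by rw [mul_invOf_self]; simp
  have hnn : (0 : A) ≤ star a * a := star_mul_self_nonneg a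
  have hle1 : ‖star a * a‖ ≤ 1 := by
    rw [CStarAlgebra.norm_le_one_iff_of_nonneg _ hnn, key]
    have : (0 : A) ≤ b := star_mul_self_nonneg _
    simpa using sub_le_self 1 this
  have hne : ‖star a * a‖ ≠ 1 := by
    intro h1
    have hmem : ‖star a * a‖ ∈ spectrum ℝ (star a * a) :=
      CStarAlgebra.norm_mem_spectrum_of_nonneg hnn
    rw [h1, spectrum.mem_iff] at hmem
    apply hmem
    have : algebraMap ℝ A 1 - star a * a = b := by rw [key]; simp
    rw [this, hb]
    exact (isUnit_of_invertible (⅟x1)).star.mul (isUnit_of_invertible (⅟x1))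
  have hlt : ‖star a * a‖ < 1 := lt_of_le_of_ne hle1 hne
  rw [CStarRing.norm_star_mul_self] at hlt
  nlinarith [norm_nonneg a]
end

section
/- Let A be a unital C*-algebra and a ∈ A with ‖a‖ < 1. Setting x1 = (1 − a*a)^{-1/2} and x2 = a·x1, the pair x = (x1, x2) satisfies x1 invertible, x1*x1 − x2*x2 = 1, and x2·x1⁻¹ = a. -/
/-- Let `a ∈ A` with `‖a‖ < 1`.  Setting
`x1 = (1 − a*a)^{-1/2}` and `x2 = a x1`, the pair `x = (x1, x2)` satisfies:
`x1` is invertible, `x1* x1 − x2* x2 = 1`, and `x2 x1⁻¹ = a`. -/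
theorem stmt6 {A : Type*} [CStarAlgebra A] [PartialOrder A] [StarOrderedRing A]
    (a : A) (ha : ‖a‖ < 1) :
    IsUnit (Ring.inverse (CFC.sqrt (1 - star a * a))) ∧
    (star (Ring.inverse (CFC.sqrt (1 - star a * a))) * Ring.inverse (CFC.sqrt (1 - star a * a))
      - star (a * Ring.inverse (CFC.sqrt (1 - star a * a)))
        * (a * Ring.inverse (CFC.sqrt (1 - star a * a))) = 1) ∧
    (a * Ring.inverse (CFC.sqrt (1 - star a * a)))
      * Ring.inverse (Ring.inverse (CFC.sqrt (1 - star a * a))) = a := by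
  have hnorm : ‖a‖ ^ 2 < 1 := by
    have h0 := norm_nonneg a
    nlinarith
  -- positivity of b := 1 - star a * a
  have hb0 : (0 : A) ≤ 1 - star a * a := by
    have h1 : star a * a ≤ algebraMap ℝ A (‖a‖ ^ 2) :=
      CStarAlgebra.star_mul_le_algebraMap_norm_sq
    have h2 : algebraMap ℝ A (‖a‖ ^ 2) ≤ 1 := by
      have hr : (0 : ℝ) ≤ 1 - ‖a‖ ^ 2 := by linarith
      set c : A := algebraMap ℝ A (Real.sqrt (1 - ‖a‖ ^ 2)) with hc
      have hcs : star c = c := by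
        rw [hc, ← algebraMap_star_comm, star_trivial]
      have hpos : (0 : A) ≤ algebraMap ℝ A (1 - ‖a‖ ^ 2) := by
        have h := star_mul_self_nonneg c
        rwa [hcs, hc, ← map_mul, Real.mul_self_sqrt hr] at h
      rw [map_sub, map_one] at hpos
      exact sub_nonneg.mp hpos
    exact sub_nonneg.mpr (h1.trans h2)
  have hbu : IsUnit (1 - star a * a) := by
    have hlt : ‖star a * a‖ < 1 := by
      rw [CStarRing.norm_star_mul_self, ← pow_two]; exact hnorm
    exact (Units.oneSub (star a * a) hlt).isUnit
  set s := CFC.sqrt (1 - star a * a) with hs_def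
  have hss : s * s = 1 - star a * a := CFC.sqrt_mul_sqrt_self _ hb0
  have hs0 : (0 : A) ≤ s := CFC.sqrt_nonneg _
  have hssa : star s = s := IsSelfAdjoint.of_nonneg hs0
  have hcomm : Commute s (1 - star a * a) := by
    rw [← hss]; exact (Commute.refl s).mul_right (Commute.refl s)
  -- s is a unit
  have hsu : IsUnit s := by
    have hcomm' : Commute s ↑hbu.unit⁻¹ :=
      Commute.units_inv_right (by rwa [IsUnit.unit_spec])
    refine isUnit_iff_exists.mpr ⟨s * ↑hbu.unit⁻¹, ?_, ?_⟩
    · rw [← mul_assoc, hss]; exact hbu.mul_val_inv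
    · rw [hcomm'.eq, mul_assoc, hss]
      exact hbu.val_inv_mul
  obtain ⟨u, hu⟩ := hsu
  have hinv : Ring.inverse s = ↑u⁻¹ := by rw [← hu, Ring.inverse_unit]
  have hinv2 : Ring.inverse (Ring.inverse s) = s := by
    rw [hinv, Ring.inverse_unit, inv_inv, hu]
  have hstar_inv : star (Ring.inverse s) = Ring.inverse s := by
    rw [← Ring.inverse_star, hssa]
  refine ⟨?_, ?_, ?_⟩
  · rw [hinv]; exact (u⁻¹).isUnit
  · rw [star_mul, hstar_inv]
    have hmul1 : Ring.inverse s * s = 1 := Ring.inverse_mul_cancel s ⟨u, hu⟩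
    have hmul2 : s * Ring.inverse s = 1 := Ring.mul_inverse_cancel s ⟨u, hu⟩
    have key : Ring.inverse s * (star a * a) * Ring.inverse s
        = Ring.inverse s * Ring.inverse s - 1 := by
      have h3 : star a * a = 1 - s * s := by rw [hss]; noncomm_ring
      rw [h3, mul_sub, mul_one, sub_mul, ← mul_assoc, mul_assoc _ s s,
        ← mul_assoc (Ring.inverse s) s, hmul1, one_mul, hmul2]
    calc Ring.inverse s * Ring.inverse s
        - Ring.inverse s * star a * (a * Ring.inverse s)
        = Ring.inverse s * Ring.inverse s
          - Ring.inverse s * (star a * a) * Ring.inverse s := by noncomm_ring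
      _ = 1 := by rw [key]; noncomm_ring
  · rw [hinv2, mul_assoc, Ring.inverse_mul_cancel s ⟨u, hu⟩, mul_one]
end

section
/- Let A be a unital C*-algebra, b ∈ A, and a an element of A** with ‖a‖ = 1. Then (1 + b*b)^{1/2} + b*·a is invertible in A**. -/
/-- Let `b ∈ A` and `a ∈ A**` with `‖a‖ = 1` (both modelled here
as elements of the von Neumann algebra `A**`, a unital C*-algebra `M`).  Then
`(1 + b*b)^{1/2} + b* a` is invertible. -/
theorem stmt10 {M : Type*} [CStarAlgebra M] [PartialOrder M] [StarOrderedRing M]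
    (b a : M) (ha : ‖a‖ = 1) :
    IsUnit (CFC.sqrt (1 + star b * b) + star b * a) := by
  set c := star b * b with hc_def
  have hc : 0 ≤ c := star_mul_self_nonneg b
  have h1c : (0:M) ≤ 1 + c := add_nonneg zero_le_one hc
  set s := CFC.sqrt (1 + c) with hs_def
  have hs : 0 ≤ s := CFC.sqrt_nonneg _
  have hss : s * s = 1 + c := CFC.sqrt_mul_sqrt_self _ h1c
  -- `1 + c` is a unit
  have h1cu : IsUnit (1 + c) :=
    CStarAlgebra.isUnit_of_le 1 (le_add_of_nonneg_right hc)
  -- hence `s` is a unit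
  obtain ⟨u, hu⟩ := h1cu
  have hcomm : Commute s (↑u⁻¹ : M) := by
    have : Commute s (↑u : M) := by rw [hu, ← hss]; exact (Commute.refl s).mul_right rfl
    exact this.units_inv_right
  have hsu : IsUnit s := by
    refine ⟨⟨s, ↑u⁻¹ * s, ?_, ?_⟩, rfl⟩
    · rw [← mul_assoc, hcomm.eq, mul_assoc, hss, ← hu, u.inv_mul]
    · rw [mul_assoc, hss, ← hu, u.inv_mul]
  obtain ⟨su, hsuv⟩ := hsu
  -- `↑su⁻¹` is selfadjoint and nonneg
  have hsinv_nonneg : (0:M) ≤ ↑su⁻¹ := CFC.inv_nonneg_of_nonneg su (by rw [hsuv]; exact hs)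
  have hsinv_sa : star (↑su⁻¹ : M) = ↑su⁻¹ := (IsSelfAdjoint.of_nonneg hsinv_nonneg)
  -- the key element `x = s⁻¹ b*`
  set x := (↑su⁻¹ : M) * star b with hx_def
  set y := (↑su⁻¹ : M) * c * ↑su⁻¹ with hy_def
  have hxy : x * star x = y := by
    simp only [hx_def, hy_def, star_mul, star_star, hsinv_sa, hc_def]
    noncomm_ring
  have hy_nonneg : 0 ≤ y := by
    have := star_left_conjugate_nonneg hc (↑su⁻¹ : M)
    rwa [hsinv_sa] at this
  -- `y = 1 - su⁻¹ * su⁻¹`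
  have hy_eq : y = 1 - (↑su⁻¹ : M) * ↑su⁻¹ := by
    have h1 : (↑su⁻¹ : M) * (1 + c) * ↑su⁻¹ = 1 := by
      rw [← hss, ← hsuv, ← Units.val_mul, ← Units.val_mul, ← Units.val_mul, ← Units.val_one]
      congr 1
      group
    have := h1
    rw [mul_add, add_mul, mul_one] at this
    rw [hy_def, eq_sub_iff_add_eq, add_comm, ← this]
  -- bound: `su⁻¹ * su⁻¹ ≥ (1 + ‖c‖)⁻¹`
  set t : ℝ := 1 + ‖c‖ with ht_def
  have ht1 : (1:ℝ) ≤ t := le_add_of_nonneg_right (norm_nonneg c)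
  have ht0 : (0:ℝ) < t := lt_of_lt_of_le one_pos ht1
  -- the unit given by `algebraMap ℝ M t`
  have htu : IsUnit (algebraMap ℝ M t) :=
    (isUnit_iff_ne_zero.mpr ht0.ne').map (algebraMap ℝ M)
  obtain ⟨tu, htuv⟩ := htu
  have htu_inv : (↑tu⁻¹ : M) = algebraMap ℝ M t⁻¹ := by
    have : (algebraMap ℝ M t⁻¹) * ↑tu = 1 := by
      rw [htuv, ← map_mul, inv_mul_cancel₀ ht0.ne', map_one]
    calc (↑tu⁻¹ : M) = (algebraMap ℝ M t⁻¹ * ↑tu) * ↑tu⁻¹ := by rw [this, one_mul]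
      _ = algebraMap ℝ M t⁻¹ := by rw [mul_assoc, tu.mul_inv, mul_one]
  have hle : ((su * su : Mˣ) : M) ≤ tu := by
    rw [Units.val_mul, hsuv, hss, htuv, ht_def, map_add, map_one]
    exact add_le_add_right (IsSelfAdjoint.le_algebraMap_norm_self (.of_nonneg hc)) 1
  have hinv_le : (↑tu⁻¹ : M) ≤ ↑(su * su)⁻¹ :=
    CStarAlgebra.inv_le_inv (by rw [Units.val_mul, hsuv, hss]; exact h1c) hle
  have hinv_le' : algebraMap ℝ M t⁻¹ ≤ (↑su⁻¹ : M) * ↑su⁻¹ := by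
    rw [← htu_inv]
    simpa [mul_inv_rev, Units.val_mul] using hinv_le
  -- so `‖y‖ ≤ 1 - t⁻¹ < 1`
  have hy_le : y ≤ algebraMap ℝ M (1 - t⁻¹) := by
    rw [hy_eq, map_sub, map_one]
    exact sub_le_sub_left hinv_le' 1
  have hy_norm : ‖y‖ ≤ 1 - t⁻¹ := by
    rw [CStarAlgebra.norm_le_iff_le_algebraMap y
      (by rw [sub_nonneg]; exact inv_le_one_of_one_le₀ ht1) hy_nonneg]
    exact hy_le
  have hy_lt : ‖y‖ < 1 := lt_of_le_of_lt hy_norm (by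
    have : (0:ℝ) < t⁻¹ := inv_pos.mpr ht0
    linarith)
  -- hence `‖x‖ < 1`
  have hx_norm : ‖x‖ < 1 := by
    have h2 : ‖x‖ * ‖x‖ = ‖y‖ := by rw [← hxy, CStarRing.norm_self_mul_star]
    nlinarith [norm_nonneg x, hy_lt]
  -- `‖x * a‖ < 1`, so `1 + x * a` is a unit
  have hxa : ‖x * a‖ < 1 := by
    calc ‖x * a‖ ≤ ‖x‖ * ‖a‖ := norm_mul_le x a
      _ = ‖x‖ := by rw [ha, mul_one]
      _ < 1 := hx_norm
  have hneg : ‖-(x * a)‖ < 1 := by rwa [norm_neg]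
  have hunit : IsUnit (1 + x * a) := by
    have := (Units.oneSub (-(x * a)) hneg).isUnit
    rwa [Units.val_oneSub, sub_neg_eq_add] at this
  -- conclude: `s + b* a = s * (1 + x * a)`
  have hfact : s + star b * a = s * (1 + x * a) := by
    rw [hx_def, mul_add, mul_one, ← mul_assoc, ← mul_assoc, ← hsuv, su.mul_inv, one_mul]
  rw [hfact, ← hsuv]
  exact su.isUnit.mul hunit
end

section
/- Let A be a unital C*-algebra and z ∈ A with ‖z‖ < 1. Define g̃_z ∈ M₂(A) by g̃_z = [[ (1−z*z)^{-1/2}, (1+z*)⁻¹z*(z+1)(1−z*z)^{-1/2} ], [ z(1−z*z)^{-1/2}, (1+z*)⁻¹(z+1)(1−z*z)^{-1/2} ]]. Then g̃_z*·ρ·g̃_z = ρ where ρ = diag(1,−1), i.e., g̃_z preserves the form θ(x,y) = x1*y1 − x2*y2. -/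
/-- For `z ∈ A` with `‖z‖ < 1`, the matrix
`g̃_z = [[(1−z*z)^{-1/2}, (1+z*)⁻¹ z* (z+1)(1−z*z)^{-1/2}],
        [z(1−z*z)^{-1/2}, (1+z*)⁻¹ (z+1)(1−z*z)^{-1/2}]]`
satisfies `g̃_z* ρ g̃_z = ρ`, where `ρ = diag(1, −1)`; i.e. `g̃_z` preserves the
form `θ(x,y) = x1* y1 − x2* y2`. -/
theorem stmt15 {A : Type*} [CStarAlgebra A] [PartialOrder A] [StarOrderedRing A]
    (z : A) (hz : ‖z‖ < 1) :
    star (!![Ring.inverse (CFC.sqrt (1 - star z * z)),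
              Ring.inverse (1 + star z) * star z * (z + 1) * Ring.inverse (CFC.sqrt (1 - star z * z));
             z * Ring.inverse (CFC.sqrt (1 - star z * z)),
              Ring.inverse (1 + star z) * (z + 1) * Ring.inverse (CFC.sqrt (1 - star z * z))])
      * !![(1 : A), 0; 0, -1]
      * !![Ring.inverse (CFC.sqrt (1 - star z * z)),
              Ring.inverse (1 + star z) * star z * (z + 1) * Ring.inverse (CFC.sqrt (1 - star z * z));
           z * Ring.inverse (CFC.sqrt (1 - star z * z)),
              Ring.inverse (1 + star z) * (z + 1) * Ring.inverse (CFC.sqrt (1 - star z * z))]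
      = !![(1 : A), 0; 0, -1] := by
  have hzn : (0:ℝ) ≤ ‖z‖ := norm_nonneg z
  have hzz : ‖star z * z‖ < 1 := by
    calc ‖star z * z‖ ≤ ‖star z‖ * ‖z‖ := norm_mul_le _ _
    _ = ‖z‖ * ‖z‖ := by rw [norm_star]
    _ < 1 := by nlinarith
  have hup : IsUnit (1 - star z * z) := by
    simpa using (Units.oneSub (star z * z) hzz).isUnit
  have hpn : (0:A) ≤ 1 - star z * z := by
    have h1 := CStarAlgebra.star_mul_le_algebraMap_norm_sq (a := z) (A := A)
    have h2 : algebraMap ℝ A (‖z‖^2) ≤ 1 := by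
      have hn : (0:A) ≤ algebraMap ℝ A (1 - ‖z‖^2) := by
        rw [show (1 - ‖z‖^2 : ℝ) = Real.sqrt (1-‖z‖^2) * Real.sqrt (1-‖z‖^2) from
          (Real.mul_self_sqrt (by nlinarith)).symm, map_mul]
        calc (0:A) ≤ star (algebraMap ℝ A (Real.sqrt (1-‖z‖^2))) * algebraMap ℝ A (Real.sqrt (1-‖z‖^2)) :=
              star_mul_self_nonneg _
          _ = _ := by rw [← algebraMap_star_comm, star_trivial]
      rw [map_sub, map_one] at hn
      exact sub_nonneg.mp hn
    exact sub_nonneg.mpr (h1.trans h2)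
  -- square root facts
  have hsq : CFC.sqrt (1 - star z * z) * CFC.sqrt (1 - star z * z) = 1 - star z * z :=
    CFC.sqrt_mul_sqrt_self _ hpn
  have hsu : IsUnit (CFC.sqrt (1 - star z * z)) := by
    rw [← isUnit_mul_self_iff, hsq]; exact hup
  set s := Ring.inverse (CFC.sqrt (1 - star z * z)) with hs_def
  have hs : star s = s := by
    rw [hs_def, ← Ring.inverse_star, (IsSelfAdjoint.of_nonneg (CFC.sqrt_nonneg _)).star_eq]
  have hs1 : s * CFC.sqrt (1 - star z * z) = 1 := Ring.inverse_mul_cancel _ hsu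
  have hs2 : CFC.sqrt (1 - star z * z) * s = 1 := Ring.mul_inverse_cancel _ hsu
  have hsp : s * ((1 - star z * z) * s) = 1 := by
    rw [← hsq, mul_assoc, ← mul_assoc s, hs1, one_mul, hs2]
  -- invertibility of 1 ± z
  have huz : IsUnit (1 + z) := by
    have := (Units.oneSub (-z) (by simpa using hz)).isUnit; rwa [Units.val_oneSub, sub_neg_eq_add] at this
  have huzs : IsUnit (1 + star z) := by
    have := (Units.oneSub (-star z) (by simpa using hz)).isUnit; rwa [Units.val_oneSub, sub_neg_eq_add] at this
  set e := Ring.inverse (1 + star z) with he_def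
  set f := Ring.inverse (1 + z) with hf_def
  have hef : star e = f := by rw [he_def, hf_def, ← Ring.inverse_star, star_add, star_one, star_star]
  have he1 : (1 + star z) * e = 1 := Ring.mul_inverse_cancel _ huzs
  have he2 : e * (1 + star z) = 1 := Ring.inverse_mul_cancel _ huzs
  have hf1 : (1 + z) * f = 1 := Ring.mul_inverse_cancel _ huz
  have hf2 : f * (1 + z) = 1 := Ring.inverse_mul_cancel _ huz
  have hez : e * star z = star z * e := by
    calc e * star z = e * (star z * ((1 + star z) * e)) := by rw [he1, mul_one]
    _ = e * ((1 + star z) * (star z * e)) := by noncomm_ring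
    _ = star z * e := by rw [← mul_assoc, he2, one_mul]
  have hfz : f * z = z * f := by
    calc f * z = f * (z * ((1 + z) * f)) := by rw [hf1, mul_one]
    _ = f * ((1 + z) * (z * f)) := by noncomm_ring
    _ = z * f := by rw [← mul_assoc, hf2, one_mul]
  ext i j
  fin_cases i <;> fin_cases j <;>
    simp [Matrix.mul_apply, Fin.sum_univ_two, Matrix.star_apply, hs, hef, star_mul, star_star, star_add]
  · have h : s * s + -(s * star z * (z * s)) = s * ((1 - star z * z) * s) := by noncomm_ring
    rw [h, hsp]
  · rw [hez]; noncomm_ring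
  · rw [← hfz]; noncomm_ring
  · have key : (star z + 1) * (z * f) * (e * star z * (z + 1)) - (star z + 1) * f * (e * (z + 1))
        = -(1 - star z * z) := by
      calc (star z + 1) * (z * f) * (e * star z * (z + 1)) - (star z + 1) * f * (e * (z + 1))
          = (star z + 1) * ((f * (z * ((1 + star z) * e))) - (f * (1 + z)) * e) * (z + 1) := by
            rw [← hfz, hez]; noncomm_ring
        _ = (star z + 1) * (f * z - e) * (z + 1) := by rw [he1, hf2, mul_one, one_mul]
        _ = (star z + 1) * (f * (1 + z)) * z - (1 + star z) * e * (z + 1) := by noncomm_ring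
        _ = -(1 - star z * z) := by rw [hf2, he1, mul_one, one_mul]; noncomm_ring
    have h2 : s * ((star z + 1) * (z * f)) * (e * star z * (z + 1) * s)
          + -(s * ((star z + 1) * f) * (e * (z + 1) * s))
        = s * ((star z + 1) * (z * f) * (e * star z * (z + 1))
            - (star z + 1) * f * (e * (z + 1))) * s := by noncomm_ring
    rw [h2, key]
    have h3 : s * -(1 - star z * z) * s = -(s * ((1 - star z * z) * s)) := by noncomm_ring
    rw [h3, hsp]
end

section
/- Let A be a unital C*-algebra, ρ = diag(1,−1), and g̃ ∈ M₂(A) positive invertible with g̃*ρg̃ = ρ. Then there exists b ∈ A such that g̃ = [[ (1+b*b)^{1/2}, b* ], [ b, (1+bb*)^{1/2} ]]. -/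
/-- Let `ρ = diag(1,−1)` and let `g̃ ∈ M₂(A)` be positive
(`g̃ = c̃* c̃` for some `c̃`) and invertible with `g̃* ρ g̃ = ρ`.  Then there is
`b ∈ A` with `g̃ = [[(1+b*b)^{1/2}, b*], [b, (1+bb*)^{1/2}]]`. -/
theorem stmt17 {A : Type*} [CStarAlgebra A] [PartialOrder A] [StarOrderedRing A]
    (g : Matrix (Fin 2) (Fin 2) A) (hg : IsUnit g)
    (hpos : ∃ c : Matrix (Fin 2) (Fin 2) A, g = star c * c)
    (hθ : star g * !![(1 : A), 0; 0, -1] * g = !![(1 : A), 0; 0, -1]) :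
    ∃ b : A, g = !![CFC.sqrt (1 + star b * b), star b;
                    b, CFC.sqrt (1 + b * star b)] := by
  obtain ⟨c, hc⟩ := hpos
  have hsa : star g = g := by rw [hc, star_mul, star_star]
  rw [hsa] at hθ
  set a := g 0 0 with ha
  set b := g 1 0 with hb
  set d := g 1 1 with hd
  have hb' : g 0 1 = star b := by
    conv_lhs => rw [← hsa]
    simp [Matrix.star_apply]
    exact hb.symm
  -- entry equations
  have h00 : a * a - star b * b = 1 := by
    have := congrFun (congrFun hθ 0) 0
    simp [Matrix.mul_apply, Fin.sum_univ_two, hb', mul_comm] at this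
    linear_combination (norm := noncomm_ring) this
  have h11 : b * star b - d * d = -1 := by
    have := congrFun (congrFun hθ 1) 1
    simp [Matrix.mul_apply, Fin.sum_univ_two, hb'] at this
    linear_combination (norm := noncomm_ring) this
  -- positivity of diagonal entries
  have hapos : 0 ≤ a := by
    have : a = star (c 0 0) * c 0 0 + star (c 1 0) * c 1 0 := by
      rw [ha, hc]
      simp [Matrix.mul_apply, Fin.sum_univ_two, Matrix.star_apply]
    rw [this]
    exact add_nonneg (star_mul_self_nonneg _) (star_mul_self_nonneg _)
  have hdpos : 0 ≤ d := by
    have : d = star (c 0 1) * c 0 1 + star (c 1 1) * c 1 1 := by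
      rw [hd, hc]
      simp [Matrix.mul_apply, Fin.sum_univ_two, Matrix.star_apply]
    rw [this]
    exact add_nonneg (star_mul_self_nonneg _) (star_mul_self_nonneg _)
  refine ⟨b, ?_⟩
  have h1 : CFC.sqrt (1 + star b * b) = a := by
    have : (1 : A) + star b * b = a * a := by linear_combination (norm := noncomm_ring) -h00
    rw [this, CFC.sqrt_mul_self a hapos]
  have h2 : CFC.sqrt (1 + b * star b) = d := by
    have : (1 : A) + b * star b = d * d := by linear_combination (norm := noncomm_ring) h11
    rw [this, CFC.sqrt_mul_self d hdpos]
  rw [h1, h2]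
  ext i j
  fin_cases i <;> fin_cases j <;> simp [hb', ha, hb, hd]
end

section
/- Let A be a unital C*-algebra and a ∈ A** with ‖a‖ = 1 of the form a = (b + (1+bb*)^{1/2}ω)((1+b*b)^{1/2} + b*ω)⁻¹ for some b ∈ A and partial isometry ω ∈ A**. Then 1 − a*a = h·q·h for some positive invertible h ∈ A** and projection q ∈ A**; in particular 1 − a*a has closed range. -/
open scoped NNReal

section Aux

variable {M : Type*} [CStarAlgebra M] [PartialOrder M] [StarOrderedRing M]

private lemma algMap_nonneg {r : ℝ} (hr : 0 ≤ r) : (0 : M) ≤ algebraMap ℝ M r := by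
  have h1 : algebraMap ℝ M r
      = star (algebraMap ℝ M (Real.sqrt r)) * algebraMap ℝ M (Real.sqrt r) := by
    rw [← algebraMap_star_comm, star_trivial, ← map_mul, Real.mul_self_sqrt hr]
  rw [h1]
  exact star_mul_self_nonneg _

private lemma one_le_sqrt_one_add (w : M) (hw : 0 ≤ w) : (1 : M) ≤ CFC.sqrt (1 + w) := by
  rw [CFC.sqrt_eq_cfc]
  apply one_le_cfc _ _ ?_ (by fun_prop) (add_nonneg zero_le_one hw)
  intro x hx
  have hx' : (x : ℝ) ∈ spectrum ℝ (1 + w) := by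
    simpa using spectrum.algebraMap_mem ℝ hx
  have h1 : ((x : ℝ) - 1) ∈ spectrum ℝ w := by
    have heq : (x : ℝ) = ((x : ℝ) - 1) + 1 := by ring
    rw [heq, spectrum.add_mem_iff] at hx'
    have h2 : -(algebraMap ℝ M 1) + (1 + w) = w := by rw [map_one]; abel
    rwa [h2] at hx'
  have h2 : (0 : ℝ) ≤ (x : ℝ) - 1 := spectrum_nonneg_of_nonneg hw h1
  have h3 : (1 : ℝ≥0) ≤ x := by
    have : (1 : ℝ) ≤ (x : ℝ) := by linarith
    exact_mod_cast this
  calc (1 : ℝ≥0) = NNReal.sqrt 1 := NNReal.sqrt_one.symm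
  _ ≤ NNReal.sqrt x := NNReal.sqrt_le_sqrt.mpr h3

private lemma intertwine [Nontrivial M] (b : M) :
    b * CFC.sqrt (1 + star b * b) = CFC.sqrt (1 + b * star b) * b := by
  set s := CFC.sqrt (1 + star b * b) with hs_def
  set t := CFC.sqrt (1 + b * star b) with ht_def
  have hu0 : (0 : M) ≤ 1 + star b * b := add_nonneg zero_le_one (star_mul_self_nonneg b)
  have hv0 : (0 : M) ≤ 1 + b * star b := add_nonneg zero_le_one (mul_star_self_nonneg b)
  have hs0 : (0 : M) ≤ s := CFC.sqrt_nonneg _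
  have ht0 : (0 : M) ≤ t := CFC.sqrt_nonneg _
  have hs2 : s * s = 1 + star b * b := CFC.sqrt_mul_sqrt_self _ hu0
  have ht2 : t * t = 1 + b * star b := CFC.sqrt_mul_sqrt_self _ hv0
  have one_le_s : (1 : M) ≤ s := one_le_sqrt_one_add _ (star_mul_self_nonneg b)
  have one_le_t : (1 : M) ≤ t := one_le_sqrt_one_add _ (mul_star_self_nonneg b)
  set K : ℝ := max ‖s‖ ‖t‖ with hK_def
  have hKs : ‖s‖ ≤ K := le_max_left _ _
  have hKt : ‖t‖ ≤ K := le_max_right _ _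
  have one_le_K : (1 : ℝ) ≤ K := by
    have h1 : ‖(1 : M)‖ ≤ ‖s‖ := CStarAlgebra.norm_le_norm_of_nonneg_of_le zero_le_one one_le_s
    rw [norm_one] at h1
    linarith
  set κ : M := algebraMap ℝ M K with hκ_def
  have hκ0 : (0 : M) ≤ κ := algMap_nonneg (by linarith)
  have hs_le : s ≤ κ := by
    refine le_trans (IsSelfAdjoint.le_algebraMap_norm_self (IsSelfAdjoint.of_nonneg hs0)) ?_
    rw [← sub_nonneg, ← map_sub]
    exact algMap_nonneg (by linarith)
  set X : M := b * s - t * b with hX_def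
  have hX : t * X + X * s = 0 := by
    have h1 : t * X + X * s = b * (s * s) - (t * t) * b := by rw [hX_def]; noncomm_ring
    rw [h1, hs2, ht2]
    noncomm_ring
  -- (t + κ) is a unit
  have hone_le : (1 : M) ≤ t + κ := by
    calc (1 : M) ≤ t := one_le_t
    _ ≤ t + κ := le_add_of_nonneg_right hκ0
  have htκ : IsUnit (t + κ) := CStarAlgebra.isUnit_of_le 1 hone_le
  obtain ⟨U, hU⟩ := htκ
  have hU0 : (0 : M) ≤ (U : M) := by rw [hU]; exact add_nonneg ht0 hκ0
  -- the unit algebraMap (K+1)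
  have hK1 : IsUnit (algebraMap ℝ M (K + 1)) :=
    (isUnit_iff_ne_zero.mpr (by positivity : K + 1 ≠ 0)).map (algebraMap ℝ M)
  obtain ⟨V, hV⟩ := hK1
  have hV0 : (0 : M) ≤ (V : M) := by rw [hV]; exact algMap_nonneg (by positivity)
  have hVU : (V : M) ≤ (U : M) := by
    rw [hV, hU, map_add, map_one, add_comm (algebraMap ℝ M K) 1]
    exact add_le_add_left one_le_t κ
  have hinvle : (↑U⁻¹ : M) ≤ (↑V⁻¹ : M) := CStarAlgebra.inv_le_inv hV0 hVU
  have hVinv : (↑V⁻¹ : M) = algebraMap ℝ M (K + 1)⁻¹ := by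
    apply Units.inv_eq_of_mul_eq_one_right
    rw [hV, ← map_mul, mul_inv_cancel₀ (by positivity : K + 1 ≠ 0), map_one]
  have hUinv_nonneg : (0 : M) ≤ (↑U⁻¹ : M) := CFC.inv_nonneg_of_nonneg U hU0
  have hUinv_norm : ‖(↑U⁻¹ : M)‖ ≤ (K + 1)⁻¹ := by
    calc ‖(↑U⁻¹ : M)‖ ≤ ‖(↑V⁻¹ : M)‖ :=
      CStarAlgebra.norm_le_norm_of_nonneg_of_le hUinv_nonneg hinvle
    _ = ‖(K + 1)⁻¹‖ := by rw [hVinv, norm_algebraMap']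
    _ = (K + 1)⁻¹ := by rw [Real.norm_eq_abs, abs_of_pos (by positivity)]
  have hκs_norm : ‖κ - s‖ ≤ K - 1 := by
    have h1 : (0 : M) ≤ κ - s := sub_nonneg.mpr hs_le
    have h2 : κ - s ≤ algebraMap ℝ M (K - 1) := by
      rw [map_sub, map_one]
      exact sub_le_sub_left one_le_s κ
    calc ‖κ - s‖ ≤ ‖algebraMap ℝ M (K - 1)‖ :=
      CStarAlgebra.norm_le_norm_of_nonneg_of_le h1 h2
    _ = ‖K - 1‖ := norm_algebraMap' M (K - 1)
    _ = K - 1 := by rw [Real.norm_eq_abs, abs_of_nonneg (by linarith)]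
  -- the Sylvester-type identity
  have hXeq : (t + κ) * X = X * (κ - s) := by
    have hκX : κ * X = X * κ := (Algebra.commutes K X)
    have h1 : (t + κ) * X - X * (κ - s) = (t * X + X * s) + (κ * X - X * κ) := by noncomm_ring
    rw [hX, hκX, zero_add, sub_self] at h1
    exact sub_eq_zero.mp h1
  have hXrec : X = (↑U⁻¹ : M) * (X * (κ - s)) := by
    calc X = ((↑U⁻¹ : M) * (U : M)) * X := by rw [U.inv_mul, one_mul]
    _ = (↑U⁻¹ : M) * ((U : M) * X) := by rw [mul_assoc]
    _ = (↑U⁻¹ : M) * (X * (κ - s)) := by rw [hU, hXeq]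
  have hnorm : ‖X‖ ≤ (K + 1)⁻¹ * (‖X‖ * (K - 1)) := by
    calc ‖X‖ = ‖(↑U⁻¹ : M) * (X * (κ - s))‖ := by rw [← hXrec]
    _ ≤ ‖(↑U⁻¹ : M)‖ * ‖X * (κ - s)‖ := norm_mul_le _ _
    _ ≤ ‖(↑U⁻¹ : M)‖ * (‖X‖ * ‖κ - s‖) := by
        exact mul_le_mul_of_nonneg_left (norm_mul_le _ _) (norm_nonneg _)
    _ ≤ (K + 1)⁻¹ * (‖X‖ * (K - 1)) := by
        apply mul_le_mul hUinv_norm _ (by positivity) (by positivity)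
        exact mul_le_mul_of_nonneg_left hκs_norm (norm_nonneg _)
  have hXzero : X = 0 := by
    have h2 := mul_le_mul_of_nonneg_left hnorm (show (0:ℝ) ≤ K + 1 by linarith)
    rw [← mul_assoc, mul_inv_cancel₀ (by positivity : K + 1 ≠ 0), one_mul] at h2
    have h3 : ‖X‖ ≤ 0 := by nlinarith [norm_nonneg X]
    exact norm_le_zero_iff.mp h3
  have := sub_eq_zero.mp (hX_def ▸ hXzero)
  exact this

end Aux

/-- Let `a ∈ A**` (here: a unital C*-algebra `M` playing the
role of the enveloping von Neumann algebra) with `‖a‖ = 1`, of the form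
`a = (b + (1+bb*)^{1/2} ω)((1+b*b)^{1/2} + b* ω)⁻¹` for some `b` and a partial
isometry `ω`.  Then `1 − a*a = h q h` for some positive invertible `h` and some
projection `q`. -/
theorem stmt18 {M : Type*} [CStarAlgebra M] [PartialOrder M] [StarOrderedRing M]
    (a b ω : M) (ha : ‖a‖ = 1)
    (hpi : ω * star ω * ω = ω)
    (hinv : IsUnit (CFC.sqrt (1 + star b * b) + star b * ω))
    (hform : a = (b + CFC.sqrt (1 + b * star b) * ω)
        * Ring.inverse (CFC.sqrt (1 + star b * b) + star b * ω)) :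
    ∃ h q : M, (0 ≤ h ∧ IsUnit h) ∧ (IsSelfAdjoint q ∧ q * q = q) ∧
      1 - star a * a = h * q * h := by
  obtain hM | hM := subsingleton_or_nontrivial M
  · exact ⟨1, 1, ⟨le_of_eq (Subsingleton.elim _ _), isUnit_one⟩,
      ⟨Subsingleton.elim _ _, Subsingleton.elim _ _⟩, Subsingleton.elim _ _⟩
  set s := CFC.sqrt (1 + star b * b) with hs_def
  set t := CFC.sqrt (1 + b * star b) with ht_def
  set d := s + star b * ω with hd_def
  set n := b + t * ω with hn_def
  set e := Ring.inverse d with he_def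
  have hed : e * d = 1 := Ring.inverse_mul_cancel d hinv
  have hde : d * e = 1 := Ring.mul_inverse_cancel d hinv
  have he : IsUnit e := isUnit_ringInverse.mpr hinv
  have hu0 : (0 : M) ≤ 1 + star b * b := add_nonneg zero_le_one (star_mul_self_nonneg b)
  have hv0 : (0 : M) ≤ 1 + b * star b := add_nonneg zero_le_one (mul_star_self_nonneg b)
  have hs0 : (0 : M) ≤ s := CFC.sqrt_nonneg _
  have ht0 : (0 : M) ≤ t := CFC.sqrt_nonneg _
  have hssa : star s = s := (IsSelfAdjoint.of_nonneg hs0).star_eq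
  have htsa : star t = t := (IsSelfAdjoint.of_nonneg ht0).star_eq
  have hs2 : s * s = 1 + star b * b := CFC.sqrt_mul_sqrt_self _ hu0
  have ht2 : t * t = 1 + b * star b := CFC.sqrt_mul_sqrt_self _ hv0
  have key : b * s = t * b := intertwine b
  have key' : s * star b = star b * t := by
    have h := congrArg star key
    rw [star_mul, star_mul, hssa, htsa] at h
    exact h
  have hstar_d : star d = s + star ω * b := by
    rw [hd_def, star_add, star_mul, star_star, hssa]
  have hstar_n : star n = star b + star ω * t := by
    rw [hn_def, star_add, star_mul, htsa]
  set p : M := 1 - star ω * ω with hp_def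
  have hdiff : star d * d - star n * n = p := by
    rw [hstar_d, hstar_n, hd_def, hn_def]
    have expand : (s + star ω * b) * (s + star b * ω) - (star b + star ω * t) * (b + t * ω)
        = (s * s) - star b * b + (s * star b - star b * t) * ω + star ω * (b * s - t * b)
          + star ω * (b * star b) * ω - star ω * (t * t) * ω := by noncomm_ring
    rw [expand, hs2, ht2, key, key', hp_def]
    noncomm_ring
  have hone : star e * (star d * d) * e = 1 := by
    have hsede : star e * star d = 1 := by rw [← star_mul, hde, star_one]
    calc star e * (star d * d) * e = (star e * star d) * (d * e) := by noncomm_ring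
    _ = 1 := by rw [hsede, hde, one_mul]
  have ha' : star a * a = star e * (star n * n) * e := by
    rw [hform, star_mul]
    noncomm_ring
  have ha1 : 1 - star a * a = star e * p * e := by
    calc 1 - star a * a = star e * (star d * d) * e - star e * (star n * n) * e := by
          rw [hone, ha']
    _ = star e * (star d * d - star n * n) * e := by noncomm_ring
    _ = star e * p * e := by rw [hdiff]
  have hp_sa : star p = p := by
    rw [hp_def, star_sub, star_one, star_mul, star_star]
  have hpp : p * p = p := by
    have hωω : (star ω * ω) * (star ω * ω) = star ω * ω := by
      calc (star ω * ω) * (star ω * ω) = star ω * (ω * star ω * ω) := by noncomm_ring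
      _ = star ω * ω := by rw [hpi]
    calc p * p = 1 - star ω * ω - star ω * ω + (star ω * ω) * (star ω * ω) := by
          rw [hp_def]; noncomm_ring
    _ = p := by rw [hωω, hp_def]; noncomm_ring
  have hee : IsUnit (star e * e) := he.star.mul he
  set h := CFC.sqrt (star e * e) with hh_def
  have h0 : (0 : M) ≤ h := CFC.sqrt_nonneg _
  have hh2 : h * h = star e * e := CFC.sqrt_mul_sqrt_self _ (star_mul_self_nonneg e)
  have hhu : IsUnit h := by
    obtain ⟨W, hW⟩ := hee
    have hr : h * (h * (↑W⁻¹ : M)) = 1 := by rw [← mul_assoc, hh2, ← hW, W.mul_inv]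
    have hl : ((↑W⁻¹ : M) * h) * h = 1 := by rw [mul_assoc, hh2, ← hW, W.inv_mul]
    have hcomm : (↑W⁻¹ : M) * h = h * (↑W⁻¹ : M) := left_inv_eq_right_inv hl hr
    exact ⟨⟨h, h * (↑W⁻¹ : M), hr, by rw [← hcomm]; exact hl⟩, rfl⟩
  set h' := Ring.inverse h with hh'_def
  have hh'l : h' * h = 1 := Ring.inverse_mul_cancel h hhu
  have hh'r : h * h' = 1 := Ring.mul_inverse_cancel h hhu
  have hh'sa : star h' = h' := by
    rw [hh'_def, ← Ring.inverse_star, (IsSelfAdjoint.of_nonneg h0).star_eq]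
  set e' := Ring.inverse e with he'_def
  have he'l : e' * e = 1 := Ring.inverse_mul_cancel e he
  have he'r : e * e' = 1 := Ring.mul_inverse_cancel e he
  have hkey2 : h' * h' = e' * star e' := by
    have hA : (h' * h') * (star e * e) = 1 := by
      rw [← hh2]
      calc (h' * h') * (h * h) = h' * (h' * h) * h := by noncomm_ring
      _ = 1 := by rw [hh'l, mul_one, hh'l]
    have hB : (star e * e) * (e' * star e') = 1 := by
      calc (star e * e) * (e' * star e') = star e * (e * e') * star e' := by noncomm_ring
      _ = star (e' * e) := by rw [he'r, mul_one, ← star_mul]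
      _ = 1 := by rw [he'l, star_one]
    calc h' * h' = (h' * h') * ((star e * e) * (e' * star e')) := by rw [hB, mul_one]
    _ = ((h' * h') * (star e * e)) * (e' * star e') := by noncomm_ring
    _ = e' * star e' := by rw [hA, one_mul]
  have hmid : e * (h' * h') * star e = 1 := by
    rw [hkey2]
    calc e * (e' * star e') * star e = (e * e') * (star e' * star e) := by noncomm_ring
    _ = (e * e') * star (e * e') := by rw [← star_mul]
    _ = 1 := by rw [he'r, star_one, mul_one]
  set q := h' * (star e * p * e) * h' with hq_def
  refine ⟨h, q, ⟨h0, hhu⟩, ⟨?_, ?_⟩, ?_⟩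
  · show star q = q
    calc star q = star h' * (star e * star p * star (star e)) * star h' := by
          rw [hq_def, star_mul, star_mul, star_mul, star_mul]; noncomm_ring
    _ = q := by rw [hh'sa, hp_sa, star_star, hq_def]
  · calc q * q = h' * (star e * p) * (e * (h' * h') * star e) * (p * e) * h' := by
          rw [hq_def]; noncomm_ring
    _ = h' * (star e * (p * p) * e) * h' := by rw [hmid]; noncomm_ring
    _ = q := by rw [hpp, hq_def]
  · calc 1 - star a * a = star e * p * e := ha1
    _ = (h * h') * (star e * p * e) * (h' * h) := by rw [hh'r, hh'l, one_mul, mul_one]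
    _ = h * q * h := by rw [hq_def]; noncomm_ring
end
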